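/- Let X be a compact metrizable space such that S² is an absolute extensor of X (dim X ≤ 2). If ℝP^∞ is an absolute extensor of X (dim_{ℤ/2} X ≤ 1), then ℝP² is an absolute extensor of X. -/

import Mathlib

noncomputable section
open Metric Set

open Metric Set

abbrev USphere (n : ℕ) : Type :=
  (sphere (0 : EuclideanSpace ℝ (Fin (n+1))) 1 : Set (EuclideanSpace ℝ (Fin (n+1))))

def antipodalSetoid (n : ℕ) : Setoid (USphere n) where
  r x y := (x : EuclideanSpace ℝ (Fin (n+1))) = (y : EuclideanSpace ℝ (Fin (n+1)))
    ∨ (x : EuclideanSpace ℝ (Fin (n+1))) = -(y : EuclideanSpace ℝ (Fin (n+1)))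
  iseqv := by
    constructor
    · intro x; exact Or.inl rfl
    · rintro x y (h | h)
      · exact Or.inl h.symm
      · right; rw [h]; simp
    · rintro x y z (h1 | h1) (h2 | h2)
      · exact Or.inl (h1.trans h2)
      · right; rw [h1, h2]
      · right; rw [h1, h2]
      · left; rw [h1, h2]; simp

def RP (n : ℕ) : Type := Quotient (antipodalSetoid n)

instance (n : ℕ) : TopologicalSpace (RP n) := by unfold RP; infer_instance

/-- `K` is an absolute extensor of `X`: every continuous map into `K` defined on a closed
subset of `X` extends to a continuous map on all of `X`. -/
def IsAbsoluteExtensor (X : Type*) [TopologicalSpace X] (K : Type*) [TopologicalSpace K] : Prop :=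
  ∀ A : Set X, IsClosed A → ∀ f : C(A, K), ∃ g : C(X, K), ∀ a : A, g a = f a

/-- The covering projection from the sphere to projective space. -/
def pcov (n : ℕ) : USphere n → RP n := fun z => Quotient.mk (antipodalSetoid n) z

def coordIncl (n : ℕ) (x : EuclideanSpace ℝ (Fin (n+1))) : EuclideanSpace ℝ (Fin (n+2)) :=
  WithLp.toLp 2 (fun i : Fin (n+2) => if h : (i : ℕ) < n + 1 then x ⟨i, h⟩ else 0)

lemma coordIncl_mem (n : ℕ) (x : USphere n) :
    coordIncl n (x : EuclideanSpace ℝ (Fin (n+1))) ∈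
      sphere (0 : EuclideanSpace ℝ (Fin (n+2))) 1 := by
  obtain ⟨x, hx⟩ := x
  rw [mem_sphere_iff_norm, sub_zero, EuclideanSpace.norm_eq] at hx ⊢
  have h2 : ∑ i : Fin (n+2), ‖coordIncl n x i‖ ^ 2 = ∑ i : Fin (n+1), ‖x i‖ ^ 2 := by
    rw [Fin.sum_univ_castSucc]
    simp [coordIncl, Fin.is_lt, Fin.is_le]
  rw [h2]; exact hx

lemma coordIncl_neg (n : ℕ) (x : EuclideanSpace ℝ (Fin (n+1))) :
    coordIncl n (-x) = -(coordIncl n x) := by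
  ext i
  simp only [coordIncl, PiLp.toLp_apply, PiLp.neg_apply]
  split_ifs <;> simp

/-- The equatorial inclusion of spheres. -/
def sphereIncl (n : ℕ) : USphere n → USphere (n+1) :=
  fun x => ⟨coordIncl n (x : EuclideanSpace ℝ (Fin (n+1))), coordIncl_mem n x⟩

/-- The standard (equatorial) inclusion `ℝPⁿ → ℝP^(n+1)`. -/
def rpIncl (n : ℕ) : RP n → RP (n+1) :=
  Quotient.map' (sphereIncl n) (by
    rintro x y (h | h)
    · left; show coordIncl n _ = coordIncl n _; rw [h]
    · right
      show coordIncl n (x : EuclideanSpace ℝ (Fin (n+1))) = -(coordIncl n _)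
      rw [h, coordIncl_neg])
open Metric Set

/-- The real Hilbert space ℓ². -/
abbrev Hilbertl2 : Type := lp (fun _ : ℕ => ℝ) 2

def antipodalSetoidInf : Setoid (sphere (0 : Hilbertl2) 1 : Set Hilbertl2) where
  r x y := (x : Hilbertl2) = (y : Hilbertl2) ∨ (x : Hilbertl2) = -(y : Hilbertl2)
  iseqv := by
    constructor
    · intro x; exact Or.inl rfl
    · rintro x y (h | h)
      · exact Or.inl h.symm
      · right; rw [h]; simp
    · rintro x y z (h1 | h1) (h2 | h2)
      · exact Or.inl (h1.trans h2)
      · right; rw [h1, h2]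
      · right; rw [h1, h2]
      · left; rw [h1, h2]; simp

/-- Infinite real projective space: the quotient of the unit sphere of ℓ² by the
antipodal identification. -/
def RPInf : Type := Quotient antipodalSetoidInf

instance : TopologicalSpace RPInf := by unfold RPInf; infer_instance
abbrev UBall3 : Type := (closedBall (0 : EuclideanSpace ℝ (Fin 3)) 1 : Set (EuclideanSpace ℝ (Fin 3)))

def hemiLift (x : EuclideanSpace ℝ (Fin 3)) : EuclideanSpace ℝ (Fin 4) :=
  WithLp.toLp 2 (fun i : Fin 4 => if h : (i : ℕ) < 3 then x ⟨i, h⟩ else Real.sqrt (1 - ‖x‖ ^ 2))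

lemma hemiLift_mem (x : UBall3) :
    hemiLift (x : EuclideanSpace ℝ (Fin 3)) ∈ sphere (0 : EuclideanSpace ℝ (Fin 4)) 1 := by
  obtain ⟨x, hx⟩ := x
  rw [mem_closedBall, dist_zero_right] at hx
  have hx2 : ‖x‖ ^ 2 ≤ 1 := by nlinarith [norm_nonneg x]
  have hsum : ∑ i : Fin 3, ‖x i‖ ^ 2 = ‖x‖ ^ 2 := by
    rw [EuclideanSpace.norm_eq, Real.sq_sqrt]
    positivity
  rw [mem_sphere_iff_norm, sub_zero, EuclideanSpace.norm_eq]
  have h2 : ∑ i : Fin 4, ‖hemiLift x i‖ ^ 2 = 1 := by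
    rw [Fin.sum_univ_castSucc]
    have hlast : ‖hemiLift x (Fin.last 3)‖ ^ 2 = 1 - ‖x‖ ^ 2 := by
      simp only [hemiLift, Fin.last, PiLp.toLp_apply]
      rw [dif_neg (by norm_num)]
      rw [Real.norm_eq_abs, sq_abs, Real.sq_sqrt (by linarith)]
    have hcast : ∀ i : Fin 3, ‖hemiLift x (Fin.castSucc i)‖ ^ 2 = ‖x i‖ ^ 2 := by
      intro i
      simp only [hemiLift, PiLp.toLp_apply]
      rw [dif_pos (by exact i.is_lt)]
      congr 1
    rw [hlast]
    rw [Finset.sum_congr rfl (fun i _ => hcast i), hsum]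
    ring
  rw [h2, Real.sqrt_one]

/-- The quotient map `q₃ : B³ → ℝP³` (identify `B³` with the upper hemisphere of `S³`). -/
def q3 : UBall3 → RP 3 := fun x => pcov 3 ⟨hemiLift (x : EuclideanSpace ℝ (Fin 3)), hemiLift_mem x⟩

/-! ### The first modification of ℝP³ -/

/-- The disk of radius 1/3 (the meridian disk `D`). -/
abbrev DiskThird : Type :=
  (closedBall (0 : EuclideanSpace ℝ (Fin 2)) (1/3) : Set (EuclideanSpace ℝ (Fin 2)))

/-- The parametrization of the solid torus `L ⊂ B³`, obtained by rotating the disk `D`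
(of radius 1/3, centered at `(0,1/2,0)` in the yz-plane) about the z-axis. -/
def LparamE (s : USphere 1) (d : EuclideanSpace ℝ (Fin 2)) : EuclideanSpace ℝ (Fin 3) :=
  WithLp.toLp 2 (fun i : Fin 3 =>
    if i = 0 then -((s : EuclideanSpace ℝ (Fin 2)) 1) * (1/2 + d 0)
    else if i = 1 then ((s : EuclideanSpace ℝ (Fin 2)) 0) * (1/2 + d 0)
    else d 1)

lemma circle_sq_sum (s : USphere 1) :
    ((s : EuclideanSpace ℝ (Fin 2)) 0) ^ 2 + ((s : EuclideanSpace ℝ (Fin 2)) 1) ^ 2 = 1 := by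
  obtain ⟨s, hs⟩ := s
  rw [mem_sphere_iff_norm, sub_zero, EuclideanSpace.norm_eq] at hs
  have h0 : (0:ℝ) ≤ ∑ i : Fin 2, ‖s i‖ ^ 2 := by positivity
  have := Real.sq_sqrt h0
  rw [hs] at this
  rw [Fin.sum_univ_two] at this
  simpa [Real.norm_eq_abs, sq_abs] using this.symm

lemma disk_sq_sum (d : EuclideanSpace ℝ (Fin 2)) (hd : d ∈ closedBall (0 : EuclideanSpace ℝ (Fin 2)) (1/3)) :
    (d 0) ^ 2 + (d 1) ^ 2 ≤ 1/9 := by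
  rw [mem_closedBall, dist_zero_right, EuclideanSpace.norm_eq] at hd
  have h0 : (0:ℝ) ≤ ∑ i : Fin 2, ‖d i‖ ^ 2 := by positivity
  have h1 := Real.sq_sqrt h0
  have h2 : (∑ i : Fin 2, ‖d i‖ ^ 2) ≤ 1/9 := by
    nlinarith [Real.sqrt_nonneg (∑ i : Fin 2, ‖d i‖ ^ 2)]
  rw [Fin.sum_univ_two] at h2
  simpa [Real.norm_eq_abs, sq_abs] using h2

lemma LparamE_normsq (s : USphere 1) (d : EuclideanSpace ℝ (Fin 2))
    (hd : d ∈ closedBall (0 : EuclideanSpace ℝ (Fin 2)) (1/3)) :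
    ‖LparamE s d‖ ^ 2 ≤ 7/10 := by
  have hs := circle_sq_sum s
  have hdd := disk_sq_sum d hd
  have hd0 : (d 0) ^ 2 ≤ 1/9 := by nlinarith [sq_nonneg (d 1)]
  have hd0' : d 0 ≤ 1/3 := by nlinarith
  rw [EuclideanSpace.norm_eq, Real.sq_sqrt (by positivity)]
  rw [Fin.sum_univ_three]
  simp only [LparamE]
  norm_num [Fin.ext_iff]
  simp only [Real.norm_eq_abs, mul_pow, sq_abs]
  have key : ((s : EuclideanSpace ℝ (Fin 2)) 1) ^ 2 * (1/2 + d 0) ^ 2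
      + ((s : EuclideanSpace ℝ (Fin 2)) 0) ^ 2 * (1/2 + d 0) ^ 2 = (1/2 + d 0) ^ 2 := by
    linear_combination (1/2 + d 0) ^ 2 * hs
  nlinarith [sq_nonneg (d 1), sq_nonneg (1/2 + d 0)]

lemma LparamE_mem (s : USphere 1) (d : EuclideanSpace ℝ (Fin 2))
    (hd : d ∈ closedBall (0 : EuclideanSpace ℝ (Fin 2)) (1/3)) :
    LparamE s d ∈ closedBall (0 : EuclideanSpace ℝ (Fin 3)) 1 := by
  rw [mem_closedBall, dist_zero_right]
  have h := LparamE_normsq s d hd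
  nlinarith [norm_nonneg (LparamE s d)]

/-- The solid torus `L`, viewed as a subset of `ℝP³` (it misses the boundary sphere). -/
def LsetRP : Set (RP 3) :=
  {p | ∃ (s : USphere 1) (d : EuclideanSpace ℝ (Fin 2))
    (hd : d ∈ closedBall (0 : EuclideanSpace ℝ (Fin 2)) (1/3)),
      q3 ⟨LparamE s d, LparamE_mem s d hd⟩ = p}

/-- The point of the boundary circle `∂D` corresponding to `z ∈ S¹` under the standard
identification `ℝP¹ ≅ ∂D` (via the squaring map on the circle). -/
def bdPtE (z : USphere 1) : EuclideanSpace ℝ (Fin 2) :=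
  WithLp.toLp 2 (fun i : Fin 2 =>
    if i = 0 then (((z : EuclideanSpace ℝ (Fin 2)) 0) ^ 2 - ((z : EuclideanSpace ℝ (Fin 2)) 1) ^ 2) / 3
    else (2 * ((z : EuclideanSpace ℝ (Fin 2)) 0) * ((z : EuclideanSpace ℝ (Fin 2)) 1)) / 3)

lemma bdPtE_mem (z : USphere 1) : bdPtE z ∈ closedBall (0 : EuclideanSpace ℝ (Fin 2)) (1/3) := by
  have hz := circle_sq_sum z
  rw [mem_closedBall, dist_zero_right, EuclideanSpace.norm_eq]
  have h1 : ∑ i : Fin 2, ‖bdPtE z i‖ ^ 2 = (1/3 : ℝ) ^ 2 := by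
    rw [Fin.sum_univ_two]
    simp only [bdPtE]
    norm_num [Fin.ext_iff]
    simp only [div_pow, mul_pow, sq_abs]
    linear_combination ((((z : EuclideanSpace ℝ (Fin 2)) 0) ^ 2 + ((z : EuclideanSpace ℝ (Fin 2)) 1) ^ 2 + 1) / 9) * hz
  rw [h1, Real.sqrt_sq (by norm_num)]

lemma bdPtE_neg (z w : USphere 1)
    (h : (z : EuclideanSpace ℝ (Fin 2)) = -(w : EuclideanSpace ℝ (Fin 2))) :
    bdPtE z = bdPtE w := by
  ext i
  have h0 : (z : EuclideanSpace ℝ (Fin 2)) 0 = -((w : EuclideanSpace ℝ (Fin 2)) 0) := by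
    rw [h]; rfl
  have h1 : (z : EuclideanSpace ℝ (Fin 2)) 1 = -((w : EuclideanSpace ℝ (Fin 2)) 1) := by
    rw [h]; rfl
  simp only [bdPtE, h0, h1]
  ring_nf

/-- The attaching map `S¹ × ℝP¹ → ℝP³` onto the boundary `∂L` of the solid torus,
using the identification of `ℝP¹` with `∂D`. -/
def attachM1 (s : USphere 1) : RP 1 → RP 3 :=
  Quotient.lift (fun z : USphere 1 => q3 ⟨LparamE s (bdPtE z), LparamE_mem s (bdPtE z) (bdPtE_mem z)⟩)
    (by
      rintro z w (h | h)
      · have : z = w := Subtype.ext h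
        rw [this]
      · have : bdPtE z = bdPtE w := bdPtE_neg z w h
        simp only [this])

/-- The underlying type of the first modification `M₁` of `ℝP³`: the disjoint union of
`ℝP³` minus the interior of the solid torus `L` and of `S¹ × ℝP²`. -/
abbrev M1Carrier : Type := {p : RP 3 // p ∉ interior LsetRP} ⊕ (USphere 1 × RP 2)

/-- The gluing relation for the first modification: a boundary point `attachM1 s c ∈ ∂L`
is identified with the point `(s, c) ∈ S¹ × ℝP¹ ⊂ S¹ × ℝP²`. -/
def M1Rel : M1Carrier → M1Carrier → Prop := fun p q =>
  ∃ (s : USphere 1) (c : RP 1) (h : attachM1 s c ∉ interior LsetRP),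
    p = Sum.inl ⟨attachM1 s c, h⟩ ∧ q = Sum.inr (s, rpIncl 1 c)

/-- The first modification `M₁` of `ℝP³`: remove the interior of the solid torus `L` and
attach `S¹ × ℝP²` via the map `S¹ × ℝP¹ → ∂L`. -/
def M1 : Type := Quot M1Rel

instance : TopologicalSpace M1 := by unfold M1; infer_instance

lemma rpIncl_not_mem_LsetRP (c : RP 2) : rpIncl 2 c ∉ LsetRP := by
  rintro ⟨s, d, hd, heq⟩
  obtain ⟨y, rfl⟩ := Quotient.exists_rep c
  have hmk : rpIncl 2 (Quotient.mk (antipodalSetoid 2) y)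
      = Quotient.mk (antipodalSetoid 3) (sphereIncl 2 y) := rfl
  rw [hmk] at heq
  have heq' := Quotient.exact heq
  have hpos : 0 < Real.sqrt (1 - ‖LparamE s d‖ ^ 2) := by
    apply Real.sqrt_pos.mpr
    have := LparamE_normsq s d hd
    linarith
  have hlift3 : hemiLift (LparamE s d) 3 = Real.sqrt (1 - ‖LparamE s d‖ ^ 2) := by
    simp only [hemiLift, PiLp.toLp_apply]
    rw [dif_neg (by decide)]
  have hincl3 : (sphereIncl 2 y : EuclideanSpace ℝ (Fin 4)) 3 = 0 := by
    show coordIncl 2 (y : EuclideanSpace ℝ (Fin 3)) 3 = 0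
    simp only [coordIncl, PiLp.toLp_apply]
    rw [dif_neg (by decide)]
  rcases heq' with h | h
  · have h3' : hemiLift (LparamE s d) 3 = (sphereIncl 2 y : EuclideanSpace ℝ (Fin 4)) 3 :=
      congrArg (fun v : EuclideanSpace ℝ (Fin 4) => v (3 : Fin 4)) h
    rw [hlift3, hincl3] at h3'
    linarith
  · have h3' : hemiLift (LparamE s d) 3 = -((sphereIncl 2 y : EuclideanSpace ℝ (Fin 4)) 3) :=
      congrArg (fun v : EuclideanSpace ℝ (Fin 4) => v (3 : Fin 4)) h
    rw [hlift3, hincl3, neg_zero] at h3'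
    linarith

lemma rpIncl_not_mem_interior_LsetRP (c : RP 2) : rpIncl 2 c ∉ interior LsetRP :=
  fun h => rpIncl_not_mem_LsetRP c (interior_subset h)

/-- The copy of the projective plane `ℝP² = q₃(∂B³)` inside the first modification `M₁`. -/
def rp2ToM1 : RP 2 → M1 :=
  fun c => Quot.mk M1Rel (Sum.inl ⟨rpIncl 2 c, rpIncl_not_mem_interior_LsetRP c⟩)

/-! ### The second modification of ℝP³ -/

/-- The solid torus `R = q₃(L) ⊂ ℝP³`, where `L ⊂ B³` is the cylinder `x² + y² ≤ 1/4`. -/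
def RsetRP : Set (RP 3) :=
  {p | ∃ x : UBall3, ((x : EuclideanSpace ℝ (Fin 3)) 0) ^ 2 + ((x : EuclideanSpace ℝ (Fin 3)) 1) ^ 2 ≤ 1/4
        ∧ q3 x = p}

/-- The copy of `ℝP² = q₃(∂B³)` inside `ℝP³`. -/
def RP2in3 : Set (RP 3) := Set.range (rpIncl 2)

/-- The disk `D = R ∩ ℝP²`. -/
def DsetM2 : Set (RP 3) := RsetRP ∩ RP2in3

/-- The boundary circle `∂D = D ∩ ∂R` of the disk `D`. -/
def bdDM2 : Set (RP 3) := DsetM2 ∩ frontier RsetRP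

/-- The subspace `T = S¹ × ℝP² ∪ {a} × ℝP³` of `S¹ × ℝP³`. -/
def TSpace (a : USphere 1) : Type :=
  {p : USphere 1 × RP 3 // (∃ c : RP 2, p.2 = rpIncl 2 c) ∨ p.1 = a}

instance (a : USphere 1) : TopologicalSpace (TSpace a) := by unfold TSpace; infer_instance

/-- The projection `π : T → S¹` onto the first coordinate. -/
def TProj (a : USphere 1) : C(TSpace a, USphere 1) :=
  ⟨fun p => p.val.1, by exact (continuous_fst.comp continuous_subtype_val)⟩

/-- The underlying type of the second modification `M₂` of `ℝP³`. -/
abbrev M2Carrier (a : USphere 1) : Type := {p : RP 3 // p ∉ interior RsetRP} ⊕ (TSpace a)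

/-- The gluing relation for the second modification, relative to a solid-torus structure
`φ : S¹ × D ≃ₜ R` on `R` and an identification `ψ : ∂D ≃ₜ ℝP¹`: a point `φ(s,d) ∈ ∂R` is
identified with the point `(s, ψ d) ∈ S¹ × ℝP¹ ⊂ S¹ × ℝP² ⊂ T`. -/
def M2Rel (a : USphere 1) (φ : (USphere 1 × ↥DsetM2) ≃ₜ ↥RsetRP) (ψ : ↥bdDM2 ≃ₜ RP 1) :
    M2Carrier a → M2Carrier a → Prop := fun p q =>
  ∃ (s : USphere 1) (d : ↥bdDM2) (h : (φ (s, ⟨d.val, d.prop.1⟩)).val ∉ interior RsetRP),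
    p = Sum.inl ⟨(φ (s, ⟨d.val, d.prop.1⟩)).val, h⟩ ∧
    q = Sum.inr ⟨(s, rpIncl 2 (rpIncl 1 (ψ d))), Or.inl ⟨rpIncl 1 (ψ d), rfl⟩⟩

/-- The second modification `M₂` of `ℝP³`: remove the interior of the solid torus `R` and
attach `S¹ × ℝP² ∪ {a} × ℝP³` via the inclusion `∂R = S¹ × ∂D → S¹ × ℝP² ∪ {a} × ℝP³`. -/
def M2 (a : USphere 1) (φ : (USphere 1 × ↥DsetM2) ≃ₜ ↥RsetRP) (ψ : ↥bdDM2 ≃ₜ RP 1) : Type :=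
  Quot (M2Rel a φ ψ)

instance (a : USphere 1) (φ : (USphere 1 × ↥DsetM2) ≃ₜ ↥RsetRP) (ψ : ↥bdDM2 ≃ₜ RP 1) :
    TopologicalSpace (M2 a φ ψ) := by unfold M2; infer_instance

open ENNReal
section AuxRP2

def jfun (x : EuclideanSpace ℝ (Fin 3)) : ∀ _ : ℕ, ℝ :=
  fun n => if h : n < 3 then x ⟨n, h⟩ else 0

lemma jfun_mem (x : EuclideanSpace ℝ (Fin 3)) : Memℓp (jfun x) 2 := by
  apply memℓp_gen
  apply summable_of_ne_finset_zero (s := Finset.range 3)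
  intro n hn
  simp only [Finset.mem_range, not_lt] at hn
  simp [jfun, Nat.not_lt.mpr hn]

def jlp (x : EuclideanSpace ℝ (Fin 3)) : Hilbertl2 := ⟨jfun x, jfun_mem x⟩

lemma jlp_apply (x : EuclideanSpace ℝ (Fin 3)) (n : ℕ) :
    (jlp x : ∀ _ : ℕ, ℝ) n = if h : n < 3 then x ⟨n, h⟩ else 0 := rfl

lemma jlp_norm (x : EuclideanSpace ℝ (Fin 3)) : ‖jlp x‖ = ‖x‖ := by
  rw [lp.norm_eq_tsum_rpow (by norm_num) (jlp x), EuclideanSpace.norm_eq]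
  have ht : ∑' n : ℕ, ‖(jlp x : ∀ _ : ℕ, ℝ) n‖ ^ (2 : ℝ≥0∞).toReal
      = ∑ n ∈ Finset.range 3, ‖(jlp x : ∀ _ : ℕ, ℝ) n‖ ^ (2 : ℝ≥0∞).toReal := by
    apply tsum_eq_sum
    intro n hn
    simp only [Finset.mem_range, not_lt] at hn
    simp [jlp_apply, Nat.not_lt.mpr hn]
  rw [ht]
  have h2 : ∑ n ∈ Finset.range 3, ‖(jlp x : ∀ _ : ℕ, ℝ) n‖ ^ (2 : ℝ≥0∞).toReal
      = ∑ i : Fin 3, ‖x i‖ ^ 2 := by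
    rw [Finset.sum_range fun n => _]
    · apply Finset.sum_congr rfl
      intro i _
      rw [jlp_apply]
      rw [dif_pos i.isLt]
      norm_num
  rw [h2]
  rw [Real.sqrt_eq_rpow]
  norm_num

lemma jlp_sub (x y : EuclideanSpace ℝ (Fin 3)) : jlp x - jlp y = jlp (x - y) := by
  apply lp.ext
  funext n
  rw [lp.coeFn_sub]
  show (jlp x : ∀ _ : ℕ, ℝ) n - (jlp y : ∀ _ : ℕ, ℝ) n = _
  rw [jlp_apply, jlp_apply, jlp_apply]
  by_cases h : n < 3
  · simp only [dif_pos h]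
    rfl
  · simp [h]

lemma jlp_neg (x : EuclideanSpace ℝ (Fin 3)) : jlp (-x) = -(jlp x) := by
  apply lp.ext
  funext n
  rw [lp.coeFn_neg]
  show _ = -((jlp x : ∀ _ : ℕ, ℝ) n)
  rw [jlp_apply, jlp_apply]
  by_cases h : n < 3
  · simp only [dif_pos h]
    rfl
  · simp [h]

lemma jlp_isometry : Isometry jlp := by
  apply Isometry.of_dist_eq
  intro x y
  rw [dist_eq_norm, dist_eq_norm, jlp_sub, jlp_norm]

def proj3 (v : Hilbertl2) : EuclideanSpace ℝ (Fin 3) := WithLp.toLp 2 (fun i : Fin 3 => (v : ∀ _ : ℕ, ℝ) (i : ℕ))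

lemma proj3_jlp (x : EuclideanSpace ℝ (Fin 3)) : proj3 (jlp x) = x := by
  ext i
  show (jlp x : ∀ _ : ℕ, ℝ) (i : ℕ) = x i
  rw [jlp_apply, dif_pos i.isLt]

lemma proj3_neg (v : Hilbertl2) : proj3 (-v) = -(proj3 v) := by
  ext i
  show ((-v : Hilbertl2) : ∀ _ : ℕ, ℝ) (i : ℕ) = -((v : ∀ _ : ℕ, ℝ) (i : ℕ))
  rw [lp.coeFn_neg]
  rfl

lemma proj3_continuous : Continuous proj3 := by
  apply (PiLp.continuous_toLp 2 _).comp
  apply continuous_pi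
  intro i
  have : LipschitzWith 1 (fun v : Hilbertl2 => (v : ∀ _ : ℕ, ℝ) (i : ℕ)) := by
    apply LipschitzWith.of_dist_le_mul
    intro v w
    rw [NNReal.coe_one, one_mul, dist_eq_norm, dist_eq_norm]
    have : v - w = v - w := rfl
    calc ‖(v : ∀ _ : ℕ, ℝ) (i:ℕ) - (w : ∀ _ : ℕ, ℝ) (i:ℕ)‖
        = ‖((v - w : Hilbertl2) : ∀ _ : ℕ, ℝ) (i:ℕ)‖ := by rw [lp.coeFn_sub]; rfl
      _ ≤ ‖v - w‖ := lp.norm_apply_le_norm (by norm_num) _ _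
  exact this.continuous

-- sphere basics
abbrev SInf : Type := (sphere (0 : Hilbertl2) 1 : Set Hilbertl2)

def negS2 (x : USphere 2) : USphere 2 :=
  ⟨-(x : EuclideanSpace ℝ (Fin 3)), by
    have := x.2
    simp only [mem_sphere_iff_norm, sub_zero] at this ⊢
    rw [norm_neg]; exact this⟩

lemma negS2_continuous : Continuous negS2 := by
  apply Continuous.subtype_mk
  exact continuous_neg.comp continuous_subtype_val

def negSInf (v : SInf) : SInf :=
  ⟨-(v : Hilbertl2), by
    have := v.2
    simp only [mem_sphere_iff_norm, sub_zero] at this ⊢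
    rw [norm_neg]; exact this⟩

lemma negSInf_continuous : Continuous negSInf := by
  apply Continuous.subtype_mk
  exact continuous_neg.comp continuous_subtype_val

def jS (x : USphere 2) : SInf :=
  ⟨jlp (x : EuclideanSpace ℝ (Fin 3)), by
    have := x.2
    simp only [mem_sphere_iff_norm, sub_zero] at this ⊢
    rw [jlp_norm]; exact this⟩

lemma jS_continuous : Continuous jS :=
  Continuous.subtype_mk (jlp_isometry.continuous.comp continuous_subtype_val) _


-- quotient layer
def qInf : SInf → RPInf := fun v => Quotient.mk antipodalSetoidInf v

lemma qInf_continuous : Continuous qInf := continuous_quot_mk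

lemma qInf_surjective : Function.Surjective qInf := fun c => Quot.exists_rep c

lemma qInf_exact {v w : SInf} (h : qInf v = qInf w) :
    (v : Hilbertl2) = w ∨ (v : Hilbertl2) = -(w : Hilbertl2) := Quotient.exact h

lemma negSInf_negSInf (v : SInf) : negSInf (negSInf v) = v := by
  apply Subtype.ext; show -(-(v:Hilbertl2)) = v; simp

lemma qInf_neg (v : SInf) : qInf (negSInf v) = qInf v :=
  Quotient.sound (Or.inr rfl)

lemma qInf_fiber {v w : SInf} (h : qInf v = qInf w) : v = w ∨ v = negSInf w := by
  rcases qInf_exact h with h' | h'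
  · exact Or.inl (Subtype.ext h')
  · exact Or.inr (Subtype.ext h')

lemma qInf_isOpenMap : IsOpenMap qInf := by
  intro U hU
  have hpre : qInf ⁻¹' (qInf '' U) = U ∪ negSInf ⁻¹' U := by
    ext z
    simp only [mem_preimage, mem_image, mem_union]
    constructor
    · rintro ⟨u, hu, huz⟩
      rcases qInf_fiber huz with rfl | rfl
      · exact Or.inl hu
      · exact Or.inr hu
    · rintro (hz | hz)
      · exact ⟨z, hz, rfl⟩
      · exact ⟨negSInf z, hz, qInf_neg z⟩
  have : IsOpen (qInf ⁻¹' (qInf '' U)) := by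
    rw [hpre]
    exact hU.union (hU.preimage negSInf_continuous)
  have hq : Topology.IsQuotientMap qInf := isQuotientMap_quot_mk
  rwa [hq.isOpen_preimage] at this

-- the inclusion RP2 → RPInf
def iota2 : RP 2 → RPInf :=
  Quotient.lift (fun x : USphere 2 => qInf (jS x)) (by
    rintro x y (h | h)
    · have : x = y := Subtype.ext h
      rw [this]
    · have hj : jS x = negSInf (jS y) := by
        apply Subtype.ext
        show jlp _ = -(jlp _)
        rw [h, jlp_neg]
      show qInf (jS x) = qInf (jS y)
      rw [hj, qInf_neg])

lemma iota2_continuous : Continuous iota2 :=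
  Continuous.quotient_lift (qInf_continuous.comp jS_continuous) _

lemma pcov2_continuous : Continuous (pcov 2) := continuous_quot_mk

lemma iota2_pcov (x : USphere 2) : iota2 (pcov 2 x) = qInf (jS x) := rfl

lemma pcov2_neg (x : USphere 2) : pcov 2 (negS2 x) = pcov 2 x :=
  Quotient.sound (Or.inr rfl)

-- open sets with sections in RPInf
def Vopen (u : Hilbertl2) : Set RPInf :=
  {c | ∀ v : SInf, qInf v = c → inner ℝ (v : Hilbertl2) u ≠ (0 : ℝ)}

lemma mem_Vopen_iff (u : Hilbertl2) (v : SInf) :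
    qInf v ∈ Vopen u ↔ inner ℝ (v : Hilbertl2) u ≠ (0 : ℝ) := by
  constructor
  · intro h; exact h v rfl
  · intro h w hw
    rcases qInf_fiber hw with rfl | rfl
    · exact h
    · show inner ℝ ((negSInf v : SInf) : Hilbertl2) u ≠ (0 : ℝ)
      show inner ℝ (-(v : Hilbertl2)) u ≠ (0 : ℝ)
      rw [inner_neg_left]
      simpa using h

lemma Vopen_isOpen (u : Hilbertl2) : IsOpen (Vopen u) := by
  refine (isQuotientMap_quot_mk.isOpen_preimage (f := fun v : SInf => Quotient.mk antipodalSetoidInf v) (s := Vopen u)).mp ?_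
  have : (fun v : SInf => Quotient.mk antipodalSetoidInf v) ⁻¹' (Vopen u)
      = {v : SInf | inner ℝ (v : Hilbertl2) u ≠ (0 : ℝ)} := by
    ext v
    exact mem_Vopen_iff u v
  rw [this]
  have hc : Continuous fun v : SInf => (inner ℝ (v : Hilbertl2) u : ℝ) :=
    Continuous.inner continuous_subtype_val continuous_const
  exact IsOpen.preimage hc isOpen_compl_singleton

-- sign-normalized representative
def sgnFix (u : Hilbertl2) (v : SInf) : SInf :=
  if inner ℝ (v : Hilbertl2) u < (0 : ℝ) then negSInf v else v

lemma qInf_sgnFix (u : Hilbertl2) (v : SInf) : qInf (sgnFix u v) = qInf v := by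
  unfold sgnFix; split_ifs
  · exact qInf_neg v
  · rfl

lemma inner_neg_coe (v : SInf) (u : Hilbertl2) :
    (inner ℝ ((negSInf v : SInf) : Hilbertl2) u : ℝ) = -(inner ℝ (v : Hilbertl2) u : ℝ) := by
  show (inner ℝ (-(v : Hilbertl2)) u : ℝ) = _
  rw [inner_neg_left]

lemma sgnFix_pos (u : Hilbertl2) (v : SInf) (h : inner ℝ (v : Hilbertl2) u ≠ (0 : ℝ)) :
    0 < (inner ℝ ((sgnFix u v : SInf) : Hilbertl2) u : ℝ) := by
  unfold sgnFix; split_ifs with hlt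
  · rw [inner_neg_coe]; linarith
  · rcases lt_or_gt_of_ne h with h' | h'
    · exact absurd h' hlt
    · exact h'

lemma sgnFix_neg (u : Hilbertl2) (v : SInf) (h : inner ℝ (v : Hilbertl2) u ≠ (0 : ℝ)) :
    sgnFix u (negSInf v) = sgnFix u v := by
  unfold sgnFix
  rw [inner_neg_coe]
  rcases lt_or_gt_of_ne h with h' | h'
  · rw [if_neg (by linarith), if_pos h']
  · rw [if_pos (by linarith), if_neg (by linarith), negSInf_negSInf]

lemma sgnFix_continuousOn (u : Hilbertl2) :
    ContinuousOn (sgnFix u) {v : SInf | inner ℝ (v : Hilbertl2) u ≠ (0 : ℝ)} := by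
  intro v hv
  apply ContinuousAt.continuousWithinAt
  have hc : Continuous fun w : SInf => (inner ℝ (w : Hilbertl2) u : ℝ) :=
    Continuous.inner continuous_subtype_val continuous_const
  rcases lt_or_gt_of_ne hv with h' | h'
  · have hev : ∀ᶠ w : SInf in nhds v, (inner ℝ (w : Hilbertl2) u : ℝ) < (0:ℝ) :=
      ContinuousAt.eventually_lt (f := fun w : SInf => (inner ℝ (w : Hilbertl2) u : ℝ))
        (g := fun _ => (0:ℝ)) hc.continuousAt continuousAt_const h'
    apply ContinuousAt.congr (negSInf_continuous.continuousAt)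
    filter_upwards [hev] with w hw
    simp [sgnFix, hw]
  · have hev : ∀ᶠ w : SInf in nhds v, (0:ℝ) < (inner ℝ (w : Hilbertl2) u : ℝ) :=
      ContinuousAt.eventually_lt (g := fun w : SInf => (inner ℝ (w : Hilbertl2) u : ℝ))
        (f := fun _ => (0:ℝ)) continuousAt_const hc.continuousAt h'
    apply ContinuousAt.congr continuousAt_id
    filter_upwards [hev] with w hw
    simp [sgnFix, not_lt.mpr (le_of_lt hw)]

-- the section over Vopen
def secInf (u : Hilbertl2) (c : RPInf) : SInf :=
  sgnFix u (Classical.choose (Quot.exists_rep c))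

lemma secInf_qInf (u : Hilbertl2) (c : RPInf) : qInf (secInf u c) = c := by
  unfold secInf
  rw [qInf_sgnFix]
  exact Classical.choose_spec (Quot.exists_rep c)

lemma secInf_comp (u : Hilbertl2) (v : SInf) (h : inner ℝ (v : Hilbertl2) u ≠ (0 : ℝ)) :
    secInf u (qInf v) = sgnFix u v := by
  unfold secInf
  have hrep : qInf (Classical.choose (Quot.exists_rep (qInf v))) = qInf v :=
    Classical.choose_spec (Quot.exists_rep (qInf v))
  rcases qInf_fiber hrep with heq | heq
  · rw [heq]
  · rw [heq, sgnFix_neg u v h]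

lemma secInf_pos (u : Hilbertl2) (c : RPInf) (h : c ∈ Vopen u) :
    0 < (inner ℝ ((secInf u c : SInf) : Hilbertl2) u : ℝ) := by
  obtain ⟨v, rfl⟩ := qInf_surjective c
  rw [secInf_comp u v ((mem_Vopen_iff u v).mp h)]
  exact sgnFix_pos u v ((mem_Vopen_iff u v).mp h)

lemma secInf_continuousOn (u : Hilbertl2) : ContinuousOn (secInf u) (Vopen u) := by
  rw [continuousOn_iff_continuous_restrict]
  set O : Set SInf := {v : SInf | inner ℝ (v : Hilbertl2) u ≠ (0 : ℝ)} with hO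
  have hOopen : IsOpen O := by
    have hc : Continuous fun v : SInf => (inner ℝ (v : Hilbertl2) u : ℝ) :=
      Continuous.inner continuous_subtype_val continuous_const
    exact IsOpen.preimage hc isOpen_compl_singleton
  set qO : O → (Vopen u) := fun v => ⟨qInf v.1, (mem_Vopen_iff u v.1).mpr v.2⟩ with hqO
  have hqOcont : Continuous qO :=
    Continuous.subtype_mk (qInf_continuous.comp continuous_subtype_val) _
  have hqOsurj : Function.Surjective qO := by
    rintro ⟨c, hc⟩
    obtain ⟨v, rfl⟩ := qInf_surjective c
    exact ⟨⟨v, (mem_Vopen_iff u v).mp hc⟩, rfl⟩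
  have hqOopen : IsOpenMap qO := by
    intro U' hU'
    obtain ⟨U, hU, hUval⟩ := isOpen_induced_iff.mp hU'
    have himg : qO '' U' = Subtype.val ⁻¹' (qInf '' (U ∩ O)) := by
      ext ⟨c, hc⟩
      simp only [mem_image, mem_preimage]
      constructor
      · rintro ⟨⟨v, hvO⟩, hvU', hveq⟩
        refine ⟨v, ⟨?_, hvO⟩, ?_⟩
        · rw [← hUval] at hvU'; exact hvU'
        · exact congrArg Subtype.val hveq
      · rintro ⟨v, ⟨hvU, hvO⟩, hveq⟩
        refine ⟨⟨v, hvO⟩, ?_, ?_⟩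
        · rw [← hUval]; exact hvU
        · exact Subtype.ext hveq
    rw [himg]
    exact (qInf_isOpenMap (U ∩ O) (hU.inter hOopen)).preimage continuous_subtype_val
  have hquot := hqOopen.isQuotientMap hqOcont hqOsurj
  rw [hquot.continuous_iff]
  have : (Set.domRestrict (Vopen u) (secInf u)) ∘ qO = fun v : O => sgnFix u v.1 := by
    funext v
    show secInf u (qInf v.1) = sgnFix u v.1
    exact secInf_comp u v.1 v.2
  rw [this]
  exact continuousOn_iff_continuous_restrict.mp (sgnFix_continuousOn u)


-- generic gluing lemma for relatively closed pieces
lemma continuousOn_union_rel {α β : Type*} [TopologicalSpace α] [TopologicalSpace β]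
    {f : α → β} {s t : Set α}
    (hs : closure s ∩ t ⊆ s) (ht : closure t ∩ s ⊆ t)
    (hfs : ContinuousOn f s) (hft : ContinuousOn f t) : ContinuousOn f (s ∪ t) := by
  intro z hz
  have Hs : ContinuousWithinAt f s z := by
    by_cases h : z ∈ s
    · exact hfs z h
    · apply continuousWithinAt_of_notMem_closure
      intro hc
      rcases hz with hz | hz
      · exact h hz
      · exact h (hs ⟨hc, hz⟩)
  have Ht : ContinuousWithinAt f t z := by
    by_cases h : z ∈ t
    · exact hft z h
    · apply continuousWithinAt_of_notMem_closure
      intro hc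
      rcases hz with hz | hz
      · exact h (ht ⟨hc, hz⟩)
      · exact h hz
  exact Hs.union Ht

-- negation on USphere 2
lemma negS2_negS2 (x : USphere 2) : negS2 (negS2 x) = x := by
  apply Subtype.ext; show -(-(x : EuclideanSpace ℝ (Fin 3))) = x; simp

section Main

variable {X : Type} [TopologicalSpace X]

def tauZ : X × SInf → X × SInf := fun p => (p.1, negSInf p.2)

lemma tauZ_continuous : Continuous (tauZ (X := X)) :=
  continuous_fst.prodMk (negSInf_continuous.comp continuous_snd)

lemma tauZ_tauZ (p : X × SInf) : tauZ (tauZ p) = p := by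
  show (p.1, negSInf (negSInf p.2)) = p
  rw [negSInf_negSInf]

def XtS (G : C(X, RPInf)) : Set (X × SInf) := {p | qInf p.2 = G p.1}

def DomOf (G : C(X, RPInf)) (E : Set X) : Set (X × SInf) := XtS G ∩ (Prod.fst ⁻¹' E)

lemma mem_DomOf {G : C(X, RPInf)} {E : Set X} {p : X × SInf} :
    p ∈ DomOf G E ↔ qInf p.2 = G p.1 ∧ p.1 ∈ E := Iff.rfl

lemma XtS_tauZ {G : C(X, RPInf)} {p : X × SInf} (hp : p ∈ XtS G) : tauZ p ∈ XtS G := by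
  show qInf (negSInf p.2) = G p.1
  rw [qInf_neg]; exact hp

lemma DomOf_tauZ {G : C(X, RPInf)} {E : Set X} {p : X × SInf} (hp : p ∈ DomOf G E) :
    tauZ p ∈ DomOf G E := ⟨XtS_tauZ hp.1, hp.2⟩

lemma DomOf_union (G : C(X, RPInf)) (E F : Set X) :
    DomOf G (E ∪ F) = DomOf G E ∪ DomOf G F := by
  unfold DomOf
  rw [preimage_union, inter_union_distrib_left]

lemma closure_DomOf {G : C(X, RPInf)} {E : Set X} (hE : IsClosed E) :
    closure (DomOf G E) ∩ XtS G ⊆ DomOf G E := by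
  rintro p ⟨hc, hXt⟩
  have : p ∈ Prod.fst ⁻¹' E := by
    have h1 : closure (DomOf G E) ⊆ Prod.fst ⁻¹' E := by
      apply closure_minimal (inter_subset_right)
      exact hE.preimage continuous_fst
    exact h1 hc
  exact ⟨hXt, this⟩

lemma glue_DomOf {G : C(X, RPInf)} {E F : Set X} (hE : IsClosed E) (hF : IsClosed F)
    {β : Type*} [TopologicalSpace β] {f : X × SInf → β}
    (hfE : ContinuousOn f (DomOf G E)) (hfF : ContinuousOn f (DomOf G F)) :
    ContinuousOn f (DomOf G (E ∪ F)) := by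
  rw [DomOf_union]
  apply continuousOn_union_rel _ _ hfE hfF
  · intro p hp
    exact closure_DomOf hE ⟨hp.1, hp.2.1⟩
  · intro p hp
    exact closure_DomOf hF ⟨hp.1, hp.2.1⟩

-- the canonical section map
def secMap (G : C(X, RPInf)) (u : Hilbertl2) : X → X × SInf :=
  fun y => (y, secInf u (G y))

lemma secMap_mem_XtS (G : C(X, RPInf)) (u : Hilbertl2) (y : X) :
    secMap G u y ∈ XtS G := secInf_qInf u (G y)

lemma secMap_continuousOn (G : C(X, RPInf)) (u : Hilbertl2) :
    ContinuousOn (secMap G u) (G ⁻¹' (Vopen u)) := by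
  apply ContinuousOn.prodMk continuousOn_id
  exact (secInf_continuousOn u).comp G.continuous.continuousOn (fun y hy => hy)

lemma fiber_cases {G : C(X, RPInf)} {p q : X × SInf} (hp : p ∈ XtS G) (hq : q ∈ XtS G)
    (h1 : p.1 = q.1) : p = q ∨ p = tauZ q := by
  have : qInf p.2 = qInf q.2 := by
    rw [hp, hq, h1]
  rcases qInf_fiber this with h2 | h2
  · left; exact Prod.ext h1 h2
  · right; exact Prod.ext h1 h2

lemma inner_ne_zero_of_DomOf {G : C(X, RPInf)} {E : Set X} {u : Hilbertl2}
    (hE : ∀ y ∈ E, G y ∈ Vopen u) {p : X × SInf} (hp : p ∈ DomOf G E) :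
    (inner ℝ ((p.2 : SInf) : Hilbertl2) u : ℝ) ≠ 0 :=
  hE p.1 hp.2 p.2 hp.1

-- the key inductive step
lemma step_extend (hdim : IsAbsoluteExtensor X (USphere 2))
    (G : C(X, RPInf)) (EB : Set X) (hEB : IsClosed EB)
    (C : Set X) (hC : IsClosed C) (u : Hilbertl2) (hCW : ∀ y ∈ C, G y ∈ Vopen u)
    (h : X × SInf → USphere 2)
    (hcont : ContinuousOn h (DomOf G EB))
    (hequiv : ∀ p ∈ DomOf G EB, h (tauZ p) = negS2 (h p)) :
    ∃ h2 : X × SInf → USphere 2, ContinuousOn h2 (DomOf G (EB ∪ C)) ∧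
      (∀ p ∈ DomOf G (EB ∪ C), h2 (tauZ p) = negS2 (h2 p)) ∧
      (∀ p ∈ DomOf G EB, h2 p = h p) := by
  classical
  set BX : Set X := EB ∩ C with hBX
  have hBXclosed : IsClosed BX := hEB.inter hC
  -- the prescribed map on BX
  have hsecmem : ∀ y ∈ BX, secMap G u y ∈ DomOf G EB :=
    fun y hy => ⟨secMap_mem_XtS G u y, hy.1⟩
  have hφ : ContinuousOn (fun y => h (secMap G u y)) BX := by
    apply hcont.comp ((secMap_continuousOn G u).mono ?_) hsecmem
    intro y hy
    exact hCW y hy.2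
  obtain ⟨F, hF⟩ := hdim BX hBXclosed ⟨BX.restrict (fun y => h (secMap G u y)),
    continuousOn_iff_continuous_restrict.mp hφ⟩
  -- the new piece on DomOf G C
  set Hx : X × SInf → USphere 2 :=
    fun p => if 0 < (inner ℝ ((p.2 : SInf) : Hilbertl2) u : ℝ) then F p.1 else negS2 (F p.1)
    with hHx
  have hip_cont : Continuous fun p : X × SInf => (inner ℝ ((p.2 : SInf) : Hilbertl2) u : ℝ) :=
    Continuous.inner (continuous_subtype_val.comp continuous_snd) continuous_const
  have hHxat : ∀ p : X × SInf, (inner ℝ ((p.2 : SInf) : Hilbertl2) u : ℝ) ≠ 0 →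
      ContinuousAt Hx p := by
    intro p hp
    rcases lt_or_gt_of_ne hp with h' | h'
    · have hev : ∀ᶠ q : X × SInf in nhds p, (inner ℝ ((q.2 : SInf) : Hilbertl2) u : ℝ) < 0 :=
        ContinuousAt.eventually_lt (f := fun q : X × SInf => (inner ℝ ((q.2:SInf) : Hilbertl2) u : ℝ))
          (g := fun _ => (0:ℝ)) hip_cont.continuousAt continuousAt_const h'
      apply ContinuousAt.congr ((negS2_continuous.comp F.continuous.fst').continuousAt)
      filter_upwards [hev] with q hq
      rw [hHx]
      simp only [if_neg (not_lt.mpr (le_of_lt hq))]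
      rfl
    · have hev : ∀ᶠ q : X × SInf in nhds p, (0:ℝ) < (inner ℝ ((q.2:SInf) : Hilbertl2) u : ℝ) :=
        ContinuousAt.eventually_lt (g := fun q : X × SInf => (inner ℝ ((q.2:SInf) : Hilbertl2) u : ℝ))
          (f := fun _ => (0:ℝ)) continuousAt_const hip_cont.continuousAt h'
      apply ContinuousAt.congr (F.continuous.fst'.continuousAt)
      filter_upwards [hev] with q hq
      rw [hHx]
      simp only [if_pos hq]
  have hHxcont : ContinuousOn Hx (DomOf G C) := by
    intro p hp
    exact (hHxat p (inner_ne_zero_of_DomOf hCW hp)).continuousWithinAt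
  -- agreement on the overlap
  have hagree : ∀ p ∈ DomOf G EB ∩ DomOf G C, Hx p = h p := by
    rintro p ⟨hpE, hpC⟩
    have hysec : secMap G u p.1 ∈ DomOf G EB := ⟨secMap_mem_XtS G u p.1, hpE.2⟩
    have hpos : 0 < (inner ℝ ((secInf u (G p.1) : SInf) : Hilbertl2) u : ℝ) :=
      secInf_pos u (G p.1) (hCW p.1 hpC.2)
    have hyBX : p.1 ∈ BX := ⟨hpE.2, hpC.2⟩
    have hFeq : F p.1 = h (secMap G u p.1) := hF ⟨p.1, hyBX⟩
    rcases fiber_cases hpE.1 (secMap_mem_XtS G u p.1) rfl with hcase | hcase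
    · have hip : 0 < (inner ℝ ((p.2 : SInf) : Hilbertl2) u : ℝ) := by
        have : p.2 = secInf u (G p.1) := congrArg Prod.snd hcase
        rw [this]; exact hpos
      rw [hHx]
      simp only [if_pos hip]
      rw [hFeq, ← hcase]
    · have hip : (inner ℝ ((p.2 : SInf) : Hilbertl2) u : ℝ) < 0 := by
        have h2' : p.2 = negSInf (secInf u (G p.1)) := congrArg Prod.snd hcase
        rw [h2', inner_neg_coe]
        linarith
      rw [hHx]
      simp only [if_neg (not_lt.mpr (le_of_lt hip))]
      rw [hFeq]
      have hsec_tau : secMap G u p.1 = tauZ p := by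
        rw [hcase, tauZ_tauZ]
        rfl
      rw [hsec_tau, hequiv p hpE, negS2_negS2]
  set h2 : X × SInf → USphere 2 := fun p => if p ∈ DomOf G EB then h p else Hx p with hh2
  have hh2E : ∀ p ∈ DomOf G EB, h2 p = h p := by
    intro p hp
    rw [hh2]; simp only [if_pos hp]
  have hh2C : ∀ p ∈ DomOf G C, h2 p = Hx p := by
    intro p hp
    rw [hh2]
    by_cases hE' : p ∈ DomOf G EB
    · simp only [if_pos hE']
      exact (hagree p ⟨hE', hp⟩).symm
    · simp only [if_neg hE']
  refine ⟨h2, ?_, ?_, hh2E⟩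
  · apply glue_DomOf hEB hC
    · exact hcont.congr hh2E
    · exact hHxcont.congr hh2C
  · intro p hp
    have hptau : tauZ p ∈ DomOf G (EB ∪ C) := DomOf_tauZ hp
    rw [DomOf_union] at hp
    rcases hp with hpE | hpC
    · rw [hh2E p hpE, hh2E (tauZ p) (DomOf_tauZ hpE)]
      exact hequiv p hpE
    · rw [hh2C p hpC, hh2C (tauZ p) (DomOf_tauZ hpC)]
      have hne := inner_ne_zero_of_DomOf hCW hpC
      have htip : (inner ℝ (((tauZ p).2 : SInf) : Hilbertl2) u : ℝ)
          = -(inner ℝ ((p.2 : SInf) : Hilbertl2) u : ℝ) := inner_neg_coe p.2 u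
      rcases lt_or_gt_of_ne hne with h' | h'
      · rw [hHx]
        simp only [if_neg (not_lt.mpr (le_of_lt h'))]
        have : 0 < (inner ℝ (((tauZ p).2 : SInf) : Hilbertl2) u : ℝ) := by rw [htip]; linarith
        simp only [if_pos this]
        show F p.1 = negS2 (negS2 (F p.1))
        rw [negS2_negS2]
      · rw [hHx]
        simp only [if_pos h']
        have : ¬ (0 < (inner ℝ (((tauZ p).2 : SInf) : Hilbertl2) u : ℝ)) := by
          rw [htip]; linarith
        simp only [if_neg this]
        rfl



-- base point of the 2-sphere
def spt : USphere 2 := ⟨EuclideanSpace.single 0 1, by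
  rw [mem_sphere_iff_norm, sub_zero, EuclideanSpace.norm_single]
  norm_num⟩

def h0 : X × SInf → USphere 2 := fun p =>
  if hn : ‖proj3 ((p.2 : SInf) : Hilbertl2)‖ = 1 then
    ⟨proj3 ((p.2 : SInf) : Hilbertl2), by rw [mem_sphere_iff_norm, sub_zero]; exact hn⟩
  else spt

variable {G : C(X, RPInf)} {A : Set X} {f : C(A, RP 2)}

lemma exists_rep_of_mem_A (hG : ∀ a : A, G a = iota2 (f a)) {p : X × SInf}
    (hp : p ∈ DomOf G A) :
    ∃ w : USphere 2, pcov 2 w = f ⟨p.1, hp.2⟩ ∧ (p.2 = jS w ∨ p.2 = negSInf (jS w)) := by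
  obtain ⟨w, hw⟩ := Quot.exists_rep (f ⟨p.1, hp.2⟩)
  have hw' : pcov 2 w = f ⟨p.1, hp.2⟩ := hw
  have h1 : qInf p.2 = qInf (jS w) := by
    rw [hp.1, hG ⟨p.1, hp.2⟩, ← hw']
    rfl
  exact ⟨w, hw', qInf_fiber h1⟩

lemma norm_proj3_of_A (hG : ∀ a : A, G a = iota2 (f a)) {p : X × SInf}
    (hp : p ∈ DomOf G A) : ‖proj3 ((p.2 : SInf) : Hilbertl2)‖ = 1 := by
  obtain ⟨w, _, hcase⟩ := exists_rep_of_mem_A hG hp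
  have hwn : ‖(w : EuclideanSpace ℝ (Fin 3))‖ = 1 := by
    have := w.2
    rwa [mem_sphere_iff_norm, sub_zero] at this
  rcases hcase with hc | hc
  · have : ((p.2 : SInf) : Hilbertl2) = jlp (w : EuclideanSpace ℝ (Fin 3)) :=
      congrArg Subtype.val hc
    rw [this, proj3_jlp, hwn]
  · have : ((p.2 : SInf) : Hilbertl2) = -(jlp (w : EuclideanSpace ℝ (Fin 3))) :=
      congrArg Subtype.val hc
    rw [this, proj3_neg, proj3_jlp, norm_neg, hwn]

lemma h0_coe_of_A (hG : ∀ a : A, G a = iota2 (f a)) {p : X × SInf} (hp : p ∈ DomOf G A) :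
    ((h0 p : USphere 2) : EuclideanSpace ℝ (Fin 3)) = proj3 ((p.2 : SInf) : Hilbertl2) := by
  unfold h0
  rw [dif_pos (norm_proj3_of_A hG hp)]

lemma h0_pcov (hG : ∀ a : A, G a = iota2 (f a)) {p : X × SInf} (hp : p ∈ DomOf G A) :
    pcov 2 (h0 p) = f ⟨p.1, hp.2⟩ := by
  obtain ⟨w, hw, hcase⟩ := exists_rep_of_mem_A hG hp
  rcases hcase with hc | hc
  · have : h0 p = w := by
      apply Subtype.ext
      rw [h0_coe_of_A hG hp, congrArg Subtype.val hc]
      show proj3 (jlp _) = _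
      rw [proj3_jlp]
    rw [this, hw]
  · have : h0 p = negS2 w := by
      apply Subtype.ext
      rw [h0_coe_of_A hG hp, congrArg Subtype.val hc]
      show proj3 (-(jlp _)) = _
      rw [proj3_neg, proj3_jlp]
      rfl
    rw [this, pcov2_neg, hw]

lemma h0_equiv (hG : ∀ a : A, G a = iota2 (f a)) {p : X × SInf} (hp : p ∈ DomOf G A) :
    h0 (tauZ p) = negS2 (h0 p) := by
  apply Subtype.ext
  rw [h0_coe_of_A hG (DomOf_tauZ hp)]
  show proj3 (-((p.2 : SInf) : Hilbertl2)) = -(_ : EuclideanSpace ℝ (Fin 3))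
  rw [proj3_neg, h0_coe_of_A hG hp]

lemma h0_continuousOn (hG : ∀ a : A, G a = iota2 (f a)) :
    ContinuousOn (h0) (DomOf G A) := by
  rw [continuousOn_iff_continuous_restrict]
  have heq : (DomOf G A).domRestrict (h0) =
      fun q : (DomOf G A) => (⟨proj3 ((q.1.2 : SInf) : Hilbertl2), by
        rw [mem_sphere_iff_norm, sub_zero]; exact norm_proj3_of_A hG q.2⟩ : USphere 2) := by
    funext q
    apply Subtype.ext
    exact h0_coe_of_A hG q.2
  rw [heq]
  apply Continuous.subtype_mk
  exact proj3_continuous.comp (continuous_subtype_val.comp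
    (continuous_snd.comp continuous_subtype_val))

end Main

end AuxRP2
/-- If `X` is a compactum with `dim X ≤ 2` and `dim_{ℤ/2} X ≤ 1` (i.e. `ℝP^∞ ∈ AE(X)`),
then `ℝP² ∈ AE(X)`. -/
theorem rp2_absolute_extensor_of_dim_le_two
    (X : Type) [TopologicalSpace X] [CompactSpace X] [TopologicalSpace.MetrizableSpace X]
    (hdim : IsAbsoluteExtensor X (USphere 2))
    (hZ2 : IsAbsoluteExtensor X RPInf) :
    IsAbsoluteExtensor X (RP 2) := by
  classical
  letI : MetricSpace X := TopologicalSpace.metrizableSpaceMetric X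
  intro A hA f
  -- Step 1: extend the classifying map to all of X
  obtain ⟨G, hG⟩ := hZ2 A hA ⟨fun a => iota2 (f a), iota2_continuous.comp f.continuous⟩
  -- Step 2: a cover of X by closed sets over which the double cover has sections
  have hcov : ∀ x : X, ∃ N : Set X, IsClosed N ∧ x ∈ interior N ∧
      ∃ u : Hilbertl2, ∀ y ∈ N, G y ∈ Vopen u := by
    intro x
    obtain ⟨v, hv⟩ := qInf_surjective (G x)
    have hmem : G x ∈ Vopen (v : Hilbertl2) := by
      rw [← hv]
      rw [mem_Vopen_iff]
      rw [real_inner_self_eq_norm_sq]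
      have : ‖(v : Hilbertl2)‖ = 1 := by
        have := v.2
        rwa [mem_sphere_iff_norm, sub_zero] at this
      rw [this]
      norm_num
    have hW : IsOpen (⇑G ⁻¹' Vopen (v : Hilbertl2)) :=
      (Vopen_isOpen (v : Hilbertl2)).preimage G.continuous
    obtain ⟨N, hN1, hN2, hN3⟩ := exists_mem_nhds_isClosed_subset (hW.mem_nhds hmem)
    exact ⟨N, hN2, mem_interior_iff_mem_nhds.mpr hN1, (v : Hilbertl2), fun y hy => hN3 hy⟩
  choose N hNclosed hNint uu hNV using hcov
  obtain ⟨t, ht⟩ := isCompact_univ.elim_finite_subcover (fun x => interior (N x))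
    (fun x => isOpen_interior) (fun x _ => mem_iUnion.mpr ⟨x, hNint x⟩)
  -- Step 3: inductively extend the equivariant lift over the cover
  have main : ∀ s : Finset X, ∃ h : X × SInf → USphere 2,
      ContinuousOn h (DomOf G (A ∪ ⋃ x ∈ s, N x)) ∧
      (∀ p ∈ DomOf G (A ∪ ⋃ x ∈ s, N x), h (tauZ p) = negS2 (h p)) ∧
      (∀ p, (hp : p ∈ DomOf G A) → pcov 2 (h p) = f ⟨p.1, hp.2⟩) := by
    intro s
    induction s using Finset.induction_on with
    | empty =>
      have hE : A ∪ ⋃ x ∈ (∅ : Finset X), N x = A := by simp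
      rw [hE]
      exact ⟨h0, h0_continuousOn hG, fun p hp => h0_equiv hG hp, fun p hp => h0_pcov hG hp⟩
    | @insert x s hxs ih =>
      obtain ⟨h, hcont, hequiv, hAcond⟩ := ih
      have hEclosed : IsClosed (A ∪ ⋃ y ∈ s, N y) :=
        hA.union (isClosed_biUnion_finset (fun y _ => hNclosed y))
      obtain ⟨h2, h2cont, h2equiv, h2eq⟩ := step_extend hdim G (A ∪ ⋃ y ∈ s, N y) hEclosed
        (N x) (hNclosed x) (uu x) (hNV x) h hcont hequiv
      have hE : A ∪ ⋃ y ∈ insert x s, N y = (A ∪ ⋃ y ∈ s, N y) ∪ N x := by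
        ext y
        simp only [Finset.mem_insert, mem_union, mem_iUnion, exists_prop]
        constructor
        · rintro (hy | ⟨z, (rfl | hz), hyz⟩)
          · exact Or.inl (Or.inl hy)
          · exact Or.inr hyz
          · exact Or.inl (Or.inr ⟨z, hz, hyz⟩)
        · rintro ((hy | ⟨z, hz, hyz⟩) | hy)
          · exact Or.inl hy
          · exact Or.inr ⟨z, Or.inr hz, hyz⟩
          · exact Or.inr ⟨x, Or.inl rfl, hy⟩
      rw [hE]
      refine ⟨h2, h2cont, h2equiv, ?_⟩
      intro p hp
      have hpE : p ∈ DomOf G (A ∪ ⋃ y ∈ s, N y) := ⟨hp.1, Or.inl hp.2⟩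
      rw [h2eq p hpE]
      exact hAcond p hp
  obtain ⟨h, hcont, hequiv, hAcond⟩ := main t
  set E : Set X := A ∪ ⋃ x ∈ t, N x with hE
  have hEuniv : ∀ y : X, y ∈ E := by
    intro y
    have := ht (mem_univ y)
    rw [mem_iUnion] at this
    obtain ⟨x, hx⟩ := this
    rw [mem_iUnion] at hx
    obtain ⟨hxt, hy⟩ := hx
    exact Or.inr (mem_iUnion.mpr ⟨x, mem_iUnion.mpr ⟨hxt, interior_subset hy⟩⟩)
  have hXtsub : XtS G ⊆ DomOf G E := fun p hp => ⟨hp, hEuniv p.1⟩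
  have hcontXt : ContinuousOn h (XtS G) := hcont.mono hXtsub
  have hequivXt : ∀ p ∈ XtS G, h (tauZ p) = negS2 (h p) := fun p hp => hequiv p (hXtsub hp)
  -- Step 4: descend to a map X → RP 2
  set zch : X → X × SInf := fun y => (y, (qInf_surjective (G y)).choose) with hzch
  have hzch_mem : ∀ y : X, zch y ∈ XtS G := fun y => (qInf_surjective (G y)).choose_spec
  set g : X → RP 2 := fun y => pcov 2 (h (zch y)) with hg
  have hwd : ∀ (y : X) (p : X × SInf), p ∈ XtS G → p.1 = y → pcov 2 (h p) = g y := by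
    intro y p hp h1
    have h1' : p.1 = (zch y).1 := h1
    rcases fiber_cases hp (hzch_mem y) h1' with hc | hc
    · rw [hc]
    · rw [hc, hequivXt (zch y) (hzch_mem y), pcov2_neg]
  have hgN : ∀ x : X, ContinuousOn g (N x) := by
    intro x
    have hsec : ContinuousOn (fun y => pcov 2 (h (secMap G (uu x) y))) (N x) := by
      apply pcov2_continuous.comp_continuousOn
      apply hcontXt.comp ((secMap_continuousOn G (uu x)).mono (fun y hy => hNV x y hy))
      intro y _
      exact secMap_mem_XtS G (uu x) y
    apply hsec.congr
    intro y hy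
    exact (hwd y (secMap G (uu x) y) (secMap_mem_XtS G (uu x) y) rfl).symm
  have hgcont : Continuous g := by
    rw [← continuousOn_univ]
    have hcovN : ∀ s : Finset X, ContinuousOn g (⋃ x ∈ s, N x) := by
      intro s
      induction s using Finset.induction_on with
      | empty => simp
      | @insert x s hxs ih =>
        have hU : ⋃ y ∈ insert x s, N y = N x ∪ ⋃ y ∈ s, N y := by
          ext y
          simp only [Finset.mem_insert, mem_union, mem_iUnion, exists_prop]
          constructor
          · rintro ⟨z, (rfl | hz), hyz⟩
            · exact Or.inl hyz
            · exact Or.inr ⟨z, hz, hyz⟩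
          · rintro (hy | ⟨z, hz, hyz⟩)
            · exact ⟨x, Or.inl rfl, hy⟩
            · exact ⟨z, Or.inr hz, hyz⟩
        rw [hU]
        apply continuousOn_union_rel _ _ (hgN x) ih
        · rw [(hNclosed x).closure_eq]
          exact inter_subset_left
        · rw [(isClosed_biUnion_finset (fun y (_ : y ∈ s) => hNclosed y)).closure_eq]
          exact inter_subset_left
    apply (hcovN t).mono
    intro y _
    have := ht (mem_univ y)
    rw [mem_iUnion] at this
    obtain ⟨x, hx⟩ := this
    rw [mem_iUnion] at hx
    obtain ⟨hxt, hy⟩ := hx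
    exact mem_iUnion.mpr ⟨x, mem_iUnion.mpr ⟨hxt, interior_subset hy⟩⟩
  refine ⟨⟨g, hgcont⟩, ?_⟩
  intro a
  show g a = f a
  have hmem : zch (a : X) ∈ DomOf G A := ⟨hzch_mem (a : X), a.2⟩
  have := hAcond (zch (a : X)) hmem
  rw [hg]
  show pcov 2 (h (zch (a : X))) = f a
  rw [this]
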